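/- arXiv:1608.06384 — 2 statements merged into one kernel-verified Lean document; each statement's English description precedes it below -/
import Mathlib

section
/- Let α, β > −1. For every natural number s and every real x: (x − 1) · c̿ᵉ_s · P^{(α+1,β)}_s(x) = [2·Γ(α+1)·Γ(s+2)·Γ(s+α+β+2) / ((2s+α+β+2)·Γ(s+α+1)·Γ(s+β+1))] · (P^{(α,β)}_{s+1}(x)·P^{(α,β)}_s(1) − P^{(α,β)}_s(x)·P^{(α,β)}_{s+1}(1)). -/
open Real MeasureTheory

noncomputable def jacA (α β : ℝ) (k : ℕ) : ℝ :=
  if k = 0 then (β - α) / (α + β + 2)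
  else (β - α) * (α + β) / ((2*(k:ℝ) + α + β) * (2*(k:ℝ) + α + β + 2))

noncomputable def jacB (α β : ℝ) (k : ℕ) : ℝ :=
  2 * ((k:ℝ) + α) * ((k:ℝ) + β) / ((2*(k:ℝ) + α + β) * (2*(k:ℝ) + α + β + 1))

noncomputable def jacC (α β : ℝ) (k : ℕ) : ℝ :=
  if k = 0 then 2 / (α + β + 2)
  else 2 * ((k:ℝ) + 1) * ((k:ℝ) + 1 + α + β) /
    ((2*(k:ℝ) + α + β + 1) * (2*(k:ℝ) + α + β + 2))

/-- The Jacobi polynomials `P^{(α,β)}_k` (as functions `ℝ → ℝ`), defined by the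
three-term recurrence. -/
noncomputable def jacP (α β : ℝ) : ℕ → ℝ → ℝ
  | 0 => fun _ => 1
  | 1 => fun x => (x - jacA α β 0) / jacC α β 0
  | (k+2) => fun x =>
      ((x - jacA α β (k+1)) * jacP α β (k+1) x - jacB α β (k+1) * jacP α β k x) / jacC α β (k+1)

/-- `c̄ᵒ_k` -/
noncomputable def cBarOdd (α β : ℝ) (k : ℕ) : ℝ :=
  if k = 0 then Real.Gamma (α + β + 2) / Real.Gamma (β + 1)
  else (2*(k:ℝ) + α + β + 1) * Real.Gamma ((k:ℝ) + α + β + 1) / Real.Gamma ((k:ℝ) + β + 1)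

/-- `c̿ᵒ_k` -/
noncomputable def cBarBarOdd (α : ℝ) (k : ℕ) : ℝ :=
  Real.Gamma ((k:ℝ) + 1) * Real.Gamma (α + 1) / Real.Gamma (α + (k:ℝ) + 1)

/-- `c̄ᵉ_k` -/
noncomputable def cBarEven (α β : ℝ) (k : ℕ) : ℝ :=
  (2*(k:ℝ) + α + β + 2) * Real.Gamma ((k:ℝ) + 1) * Real.Gamma (α + 1) /
    (2 * Real.Gamma (α + (k:ℝ) + 2))

/-- `c̿ᵉ_k` -/
noncomputable def cBarBarEven (α β : ℝ) (k : ℕ) : ℝ :=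
  Real.Gamma ((k:ℝ) + α + β + 2) / Real.Gamma ((k:ℝ) + β + 1)

/-- `φᵒ_k` -/
noncomputable def phiOdd (α β : ℝ) (k : ℕ) : ℝ := cBarOdd α β k / cBarBarOdd α k

/-- `φᵉ_k` -/
noncomputable def phiEven (α β : ℝ) (k : ℕ) : ℝ := cBarEven α β k / cBarBarEven α β k

/-- The Jacobi weight `w_{(α,β)}(x) = (1-x)^α (1+x)^β`. -/
noncomputable def jacWeight (α β : ℝ) (x : ℝ) : ℝ := (1 - x) ^ α * (1 + x) ^ β

/-- The weighted inner product `⟨f,g⟩_{(α,β)}`. -/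
noncomputable def jacInner (α β : ℝ) (f g : ℝ → ℝ) : ℝ :=
  ∫ x in (-1:ℝ)..1, f x * g x * jacWeight α β x


set_option maxHeartbeats 1600000 in
private lemma jac_rec' (α β : ℝ) (h : 0 < α + β + 2) (k : ℕ) (x : ℝ) :
    (2*(k:ℝ)+α+β+2) * (2*(k:ℝ)+α+β+3) * (2*(k:ℝ)+α+β+4) * (x * jacP α β (k+1) x)
      = (β-α)*(α+β)*(2*(k:ℝ)+α+β+3) * jacP α β (k+1) x
        + 2*((k:ℝ)+1+α)*((k:ℝ)+1+β)*(2*(k:ℝ)+α+β+4) * jacP α β k x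
        + 2*((k:ℝ)+2)*((k:ℝ)+2+α+β)*(2*(k:ℝ)+α+β+2) * jacP α β (k+2) x := by
  have hk : (0:ℝ) ≤ (k:ℝ) := Nat.cast_nonneg k
  have h1 : (2*((k:ℝ)+1)+α+β) ≠ 0 := by nlinarith
  have h2 : (2*((k:ℝ)+1)+α+β+1) ≠ 0 := by nlinarith
  have h3 : (2*((k:ℝ)+1)+α+β+2) ≠ 0 := by nlinarith
  have h4 : ((k:ℝ)+1+1) ≠ 0 := by nlinarith
  have h5 : ((k:ℝ)+1+1+α+β) ≠ 0 := by nlinarith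
  simp only [jacP, jacA, jacB, jacC, if_neg (Nat.succ_ne_zero k)]
  push_cast
  field_simp
  ring

set_option maxHeartbeats 1600000 in
private lemma keyA' (α β : ℝ) (hab : 0 < α + β + 2) (n : ℕ) (x : ℝ) :
    (2*(n:ℝ)+α+β+2) * ((x-1) * jacP (α+1) β n x)
      = 2*((n:ℝ)+1) * jacP α β (n+1) x - 2*((n:ℝ)+α+1) * jacP α β n x := by
  induction n using Nat.twoStepInduction with
  | zero =>
      have h2 : (α+β+2) ≠ 0 := ne_of_gt hab
      simp only [jacP, jacA, jacC, if_pos rfl, Nat.cast_zero, if_true]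
      field_simp
      ring
  | one =>
      have h2 : (α+β+2) ≠ 0 := ne_of_gt hab
      have h3 : (α+β+3) ≠ 0 := by nlinarith
      have h3' : (α+1+β+2) ≠ 0 := by nlinarith
      have h4 : ((2:ℝ)+α+β) ≠ 0 := by nlinarith
      have h6 : ((2:ℝ)+α+β+1) ≠ 0 := by nlinarith
      have h7 : ((2:ℝ)+α+β+2) ≠ 0 := by nlinarith
      simp only [jacP, jacA, jacB, jacC, if_pos rfl, if_neg (Nat.succ_ne_zero 0), Nat.cast_one,
        Nat.cast_zero]
      push_cast
      norm_num
      field_simp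
      ring
  | more n ih1 ih2 =>
      have hab' : 0 < (α+1) + β + 2 := by linarith
      have hk : (0:ℝ) ≤ (n:ℝ) := Nat.cast_nonneg n
      have R1 := jac_rec' α β hab n x
      have R2 := jac_rec' α β hab (n+1) x
      have HQ := jac_rec' (α+1) β hab' n x
      push_cast at R2 ih2 ⊢
      have f1 : (0:ℝ) < (n:ℝ)+2 := by linarith
      have f2 : (0:ℝ) < (n:ℝ)+α+β+3 := by linarith
      have f3 : (0:ℝ) < 2*(n:ℝ)+α+β+3 := by linarith
      have f4 : (0:ℝ) < 2*(n:ℝ)+α+β+2 := by linarith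
      have f5 : (0:ℝ) < 2*(n:ℝ)+α+β+4 := by linarith
      have hK : (2*(((n:ℝ)+2)) * ((n:ℝ)+α+β+3) * (2*(n:ℝ)+α+β+3) * (2*(n:ℝ)+α+β+2)
          * (2*(n:ℝ)+α+β+4)) ≠ 0 := by
        have := mul_pos (mul_pos (mul_pos (mul_pos (mul_pos two_pos f1) f2) f3) f4) f5
        exact ne_of_gt this
      have key : (2*(((n:ℝ)+2)) * ((n:ℝ)+α+β+3) * (2*(n:ℝ)+α+β+3) * (2*(n:ℝ)+α+β+2)
            * (2*(n:ℝ)+α+β+4))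
            * ((2*(n:ℝ)+α+β+6) * ((x-1) * jacP (α+1) β (n+2) x))
          = (2*(((n:ℝ)+2)) * ((n:ℝ)+α+β+3) * (2*(n:ℝ)+α+β+3) * (2*(n:ℝ)+α+β+2)
            * (2*(n:ℝ)+α+β+4))
            * (2*((n:ℝ)+3) * jacP α β (n+3) x - 2*((n:ℝ)+α+3) * jacP α β (n+2) x) := by
        linear_combination
          (-((2*(n:ℝ)+α+β+6) * (2*(n:ℝ)+α+β+2) * (2*(n:ℝ)+α+β+4) * (x-1))) * HQ
          + ((2*(n:ℝ)+α+β+6) * (2*(n:ℝ)+α+β+2)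
              * ((2*(n:ℝ)+α+β+3)*(2*(n:ℝ)+α+β+4)*(2*(n:ℝ)+α+β+5)*x
                  - (β-α-1)*(α+β+1)*(2*(n:ℝ)+α+β+4))) * ih2
          + (-((2*(n:ℝ)+α+β+6) * (2*(n:ℝ)+α+β+4) * 2*((n:ℝ)+α+2)*((n:ℝ)+β+1)
              * (2*(n:ℝ)+α+β+5))) * ih1
          + (2*((n:ℝ)+2) * (2*(n:ℝ)+α+β+2) * (2*(n:ℝ)+α+β+3)) * R2
          + (-(2*((n:ℝ)+α+2) * (2*(n:ℝ)+α+β+5) * (2*(n:ℝ)+α+β+6))) * R1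
      have key2 := mul_left_cancel₀ hK key
      linear_combination key2

set_option maxHeartbeats 1600000 in
private lemma jacP_one' (α β : ℝ) (hα : -1 < α) (hab : 0 < α + β + 2) (n : ℕ) :
    jacP α β n 1 = Real.Gamma ((n:ℝ)+α+1) / (Real.Gamma (α+1) * Real.Gamma ((n:ℝ)+1)) := by
  have ha1 : (0:ℝ) < α + 1 := by linarith
  have hga : Real.Gamma (α+1) ≠ 0 := (Real.Gamma_pos_of_pos ha1).ne'
  induction n using Nat.twoStepInduction with
  | zero =>
      simp only [jacP, Nat.cast_zero, zero_add, Real.Gamma_one, mul_one]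
      exact (div_self hga).symm
  | one =>
      have h2 : (α+β+2) ≠ 0 := ne_of_gt hab
      rw [show ((1:ℕ):ℝ)+α+1 = (α+1)+1 by push_cast; ring,
        Real.Gamma_add_one (by linarith),
        show ((1:ℕ):ℝ)+1 = 2 by norm_num, Real.Gamma_two]
      simp only [jacP, jacA, jacC, if_pos rfl, if_true]
      field_simp
      ring
  | more n ih1 ih2 =>
      have hgn : Real.Gamma ((n:ℝ)+1) ≠ 0 :=
        (Real.Gamma_pos_of_pos (by positivity)).ne'
      have hn1 : ((n:ℝ)+1) ≠ 0 := by positivity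
      have hn2 : ((n:ℝ)+2) ≠ 0 := by positivity
      have hk : (0:ℝ) ≤ (n:ℝ) := Nat.cast_nonneg n
      have hna1 : ((n:ℝ)+α+1) ≠ 0 := by nlinarith
      have hna2 : ((n:ℝ)+α+1+1) ≠ 0 := by nlinarith
      have g1 : Real.Gamma ((n:ℝ)+1+1) = ((n:ℝ)+1) * Real.Gamma ((n:ℝ)+1) :=
        Real.Gamma_add_one hn1
      have g2 : Real.Gamma ((n:ℝ)+2+1) = ((n:ℝ)+2) * (((n:ℝ)+1) * Real.Gamma ((n:ℝ)+1)) := by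
        rw [show (n:ℝ)+2+1 = ((n:ℝ)+1+1)+1 by ring, Real.Gamma_add_one (by positivity), g1]
        ring
      have g3 : Real.Gamma ((n:ℝ)+1+α+1) = ((n:ℝ)+α+1) * Real.Gamma ((n:ℝ)+α+1) := by
        rw [show (n:ℝ)+1+α+1 = ((n:ℝ)+α+1)+1 by ring, Real.Gamma_add_one hna1]
      have g4 : Real.Gamma ((n:ℝ)+2+α+1)
          = ((n:ℝ)+α+2) * (((n:ℝ)+α+1) * Real.Gamma ((n:ℝ)+α+1)) := by
        rw [show (n:ℝ)+2+α+1 = ((n:ℝ)+α+1+1)+1 by ring, Real.Gamma_add_one hna2,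
          show (n:ℝ)+α+1+1 = ((n:ℝ)+α+1)+1 from by ring, Real.Gamma_add_one hna1]
        ring
      have hd1 : (2*((n:ℝ)+1)+α+β) ≠ 0 := by linarith
      have hd2 : (2*((n:ℝ)+1)+α+β+1) ≠ 0 := by linarith
      have hd3 : (2*((n:ℝ)+1)+α+β+2) ≠ 0 := by linarith
      have hc1 : ((n:ℝ)+1+1) ≠ 0 := by linarith
      have hc2 : ((n:ℝ)+1+1+α+β) ≠ 0 := by linarith
      simp only [jacP, jacA, jacB, jacC, if_neg (Nat.succ_ne_zero n)]
      push_cast at ih2 ⊢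
      rw [ih1, ih2, g1, g2, g3, g4]
      field_simp
      ring

/-- the Christoffel--Darboux type identity
(x−1)·c̿ᵉ_s·P^{(α+1,β)}_s(x) = [2Γ(α+1)Γ(s+2)Γ(s+α+β+2)/((2s+α+β+2)Γ(s+α+1)Γ(s+β+1))]
  ·(P^{(α,β)}_{s+1}(x)P^{(α,β)}_s(1) − P^{(α,β)}_s(x)P^{(α,β)}_{s+1}(1)). -/
theorem stmt9 (α β : ℝ) (hα : -1 < α) (hβ : -1 < β) (s : ℕ) (x : ℝ) :
    (x - 1) * (cBarBarEven α β s * jacP (α+1) β s x)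
      = (2 * Real.Gamma (α+1) * Real.Gamma ((s:ℝ)+2) * Real.Gamma ((s:ℝ)+α+β+2) /
          ((2*(s:ℝ)+α+β+2) * Real.Gamma ((s:ℝ)+α+1) * Real.Gamma ((s:ℝ)+β+1))) *
        (jacP α β (s+1) x * jacP α β s 1 - jacP α β s x * jacP α β (s+1) 1) := by
  have hab : (0:ℝ) < α + β + 2 := by linarith
  have hs : (0:ℝ) ≤ (s:ℝ) := Nat.cast_nonneg s
  have hd : (0:ℝ) < 2*(s:ℝ)+α+β+2 := by linarith
  have hga : Real.Gamma (α+1) ≠ 0 := (Real.Gamma_pos_of_pos (by linarith)).ne'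
  have hg1 : Real.Gamma ((s:ℝ)+α+1) ≠ 0 := (Real.Gamma_pos_of_pos (by linarith)).ne'
  have hg2 : Real.Gamma ((s:ℝ)+β+1) ≠ 0 := (Real.Gamma_pos_of_pos (by linarith)).ne'
  have hgn : Real.Gamma ((s:ℝ)+1) ≠ 0 := (Real.Gamma_pos_of_pos (by linarith)).ne'
  have hs1 : ((s:ℝ)+1) ≠ 0 := by linarith
  have hsa1 : ((s:ℝ)+α+1) ≠ 0 := by linarith
  have e1 := jacP_one' α β hα hab s
  have e2 := jacP_one' α β hα hab (s+1)
  push_cast at e2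
  have gg1 : Real.Gamma ((s:ℝ)+2) = ((s:ℝ)+1) * Real.Gamma ((s:ℝ)+1) := by
    rw [show (s:ℝ)+2 = ((s:ℝ)+1)+1 by ring, Real.Gamma_add_one hs1]
  have gg2 : Real.Gamma ((s:ℝ)+1+α+1) = ((s:ℝ)+α+1) * Real.Gamma ((s:ℝ)+α+1) := by
    rw [show (s:ℝ)+1+α+1 = ((s:ℝ)+α+1)+1 by ring, Real.Gamma_add_one hsa1]
  have gg3 : Real.Gamma ((s:ℝ)+1+1) = ((s:ℝ)+1) * Real.Gamma ((s:ℝ)+1) :=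
    Real.Gamma_add_one hs1
  rw [gg2, gg3] at e2
  have kA := keyA' α β hab s x
  calc (x - 1) * (cBarBarEven α β s * jacP (α+1) β s x)
      = cBarBarEven α β s * ((2*(s:ℝ)+α+β+2) * ((x-1) * jacP (α+1) β s x))
          / (2*(s:ℝ)+α+β+2) := by
        field_simp
    _ = cBarBarEven α β s
          * (2*((s:ℝ)+1) * jacP α β (s+1) x - 2*((s:ℝ)+α+1) * jacP α β s x)
          / (2*(s:ℝ)+α+β+2) := by rw [kA]
    _ = (2 * Real.Gamma (α+1) * Real.Gamma ((s:ℝ)+2) * Real.Gamma ((s:ℝ)+α+β+2) /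
          ((2*(s:ℝ)+α+β+2) * Real.Gamma ((s:ℝ)+α+1) * Real.Gamma ((s:ℝ)+β+1))) *
        (jacP α β (s+1) x * jacP α β s 1 - jacP α β s x * jacP α β (s+1) 1) := by
        rw [cBarBarEven, e1, e2, gg1]
        field_simp
end

section
/- Let α, β > −1, let p ≥ 1, let λ be a partition with at most p+1 parts (shifted coordinates λ̃_i := λ_i + p + 1 − i for 1 ≤ i ≤ p+1), and let x_1, …, x_p be real numbers. Let M be the (p+1)×(p+1) matrix with M_{i,j} = c̿ᵒ_{λ̃_i} · P^{(α,β)}_{λ̃_i}(x_j) for 1 ≤ j ≤ p and M_{i,p+1} = c̿ᵒ_{λ̃_i} · P^{(α,β)}_{λ̃_i}(1). Then det M = (Π_{j=1}^{p} (x_j − 1)) · Σ_{μ ≺ λ} det[ c̄ᵉ_{μ̃_i} · P^{(α+1,β)}_{μ̃_i}(x_j) ]_{i,j=1}^{p}, where the (finite) sum runs over all partitions μ with at most p parts that interlace λ, i.e. λ_1 ≥ μ_1 ≥ λ_2 ≥ μ_2 ≥ … ≥ μ_p ≥ λ_{p+1}, and μ̃_i := μ_i + p − i. -/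
open Real MeasureTheory

open scoped Classical

lemma jacP_rec (α β : ℝ) (k : ℕ) (x : ℝ) :
    jacP α β (k+2) x = ((x - jacA α β (k+1)) * jacP α β (k+1) x
      - jacB α β (k+1) * jacP α β k x) / jacC α β (k+1) := rfl

lemma jacP_rec_cleared (α β : ℝ) (hab : -2 < α+β) (k : ℕ) (x : ℝ) :
    2*((k:ℝ)+2)*((k:ℝ)+2+α+β)*(2*(k:ℝ)+α+β+2) * jacP α β (k+2) x
    = (x*(2*(k:ℝ)+α+β+2)*(2*(k:ℝ)+α+β+4) - (β-α)*(α+β))*(2*(k:ℝ)+α+β+3) * jacP α β (k+1) x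
      - 2*((k:ℝ)+1+α)*((k:ℝ)+1+β)*(2*(k:ℝ)+α+β+4) * jacP α β k x := by
  have hk : (0:ℝ) ≤ (k:ℝ) := Nat.cast_nonneg k
  have h2 : (2*((k:ℝ)+1)+α+β) ≠ 0 := ne_of_gt (by linarith)
  have h3 : (2*((k:ℝ)+1)+α+β+1) ≠ 0 := ne_of_gt (by linarith)
  have h4 : (2*((k:ℝ)+1)+α+β+2) ≠ 0 := ne_of_gt (by linarith)
  have h5 : ((k:ℝ)+1+1) ≠ 0 := ne_of_gt (by linarith)
  have h6 : ((k:ℝ)+1+1+α+β) ≠ 0 := ne_of_gt (by linarith)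
  rw [jacP_rec, jacA, jacB, jacC]
  simp only [if_neg (Nat.succ_ne_zero k)]
  push_cast
  field_simp
  ring
lemma corePoly (α β n x u v w t q0 q1 q2 : ℝ)
    (HW : 2*(n+2)*(n+2+α+β)*(2*n+α+β+2)*w
      = (x*(2*n+α+β+2)*(2*n+α+β+4) - (β-α)*(α+β))*(2*n+α+β+3)*v
        - 2*(n+1+α)*(n+1+β)*(2*n+α+β+4)*u)
    (HT : 2*(n+3)*(n+3+α+β)*(2*n+α+β+4)*t
      = (x*(2*n+α+β+4)*(2*n+α+β+6) - (β-α)*(α+β))*(2*n+α+β+5)*w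
        - 2*(n+2+α)*(n+2+β)*(2*n+α+β+6)*v)
    (HQ : 2*(n+2)*(n+3+α+β)*(2*n+α+β+3)*q2
      = (x*(2*n+α+β+3)*(2*n+α+β+5) - (β-α-1)*(α+β+1))*(2*n+α+β+4)*q1
        - 2*(n+2+α)*(n+1+β)*(2*n+α+β+5)*q0)
    (H0 : 2*((n+1)*v - (α+n+1)*u) = (x-1)*(2*n+α+β+2)*q0)
    (H1 : 2*((n+2)*w - (α+n+2)*v) = (x-1)*(2*n+α+β+4)*q1) :
    (2*n+α+β+4)*(2*n+α+β+2)*(2*n+α+β+3)*(n+2)*(n+3+α+β)*(2*((n+3)*t - (α+n+3)*w))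
    = (2*n+α+β+4)*(2*n+α+β+2)*(2*n+α+β+3)*(n+2)*(n+3+α+β)*((x-1)*(2*n+α+β+6)*q2) := by
  linear_combination (4*n^3 + 4*n^2*α + 4*n^2*β + 18*n^2 + n*α^2 + 2*n*α*β + 13*n*α + n*β^2 + 13*n*β + 26*n + 2*α^2 + 4*α*β + 10*α + 2*β^2 + 10*β + 12) * HT + (-4*n^3*x + 4*n^3 - 6*n^2*α*x + 6*n^2*α - 6*n^2*β*x + 6*n^2*β - 24*n^2*x + 24*n^2 - 3*n*α^2*x + 3*n*α^2 - 6*n*α*β*x + 6*n*α*β - 24*n*α*x + 24*n*α - 3*n*β^2*x + 3*n*β^2 - 24*n*β*x + 24*n*β - 44*n*x + 44*n - (1/2)*α^3*x + (1/2)*α^3 - (3/2)*α^2*β*x + (3/2)*α^2*β - 6*α^2*x + 6*α^2 - (3/2)*α*β^2*x + (3/2)*α*β^2 - 12*α*β*x + 12*α*β - 22*α*x + 22*α - (1/2)*β^3*x + (1/2)*β^3 - 6*β^2*x + 6*β^2 - 22*β*x + 22*β - 24*x + 24) * HQ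
    + (16*n^5*x + 40*n^4*α*x + 40*n^4*β*x + 160*n^4*x + 40*n^3*α^2*x + 4*n^3*α^2 + 80*n^3*α*β*x + 320*n^3*α*x + 8*n^3*α + 40*n^3*β^2*x - 4*n^3*β^2 + 320*n^3*β*x + 620*n^3*x + 4*n^3 + 20*n^2*α^3*x + 6*n^2*α^3 + 60*n^2*α^2*β*x + 6*n^2*α^2*β + 240*n^2*α^2*x + 36*n^2*α^2 + 60*n^2*α*β^2*x - 6*n^2*α*β^2 + 480*n^2*α*β*x + 12*n^2*α*β + 930*n^2*α*x + 54*n^2*α + 20*n^2*β^3*x - 6*n^2*β^3 + 240*n^2*β^2*x - 24*n^2*β^2 + 930*n^2*β*x + 6*n^2*β + 1160*n^2*x + 24*n^2 + 5*n*α^4*x + 3*n*α^4 + 20*n*α^3*β*x + 6*n*α^3*β + 80*n*α^3*x + 30*n*α^3 + 30*n*α^2*β^2*x + 240*n*α^2*β*x + 36*n*α^2*β + 465*n*α^2*x + 95*n*α^2 + 20*n*α*β^3*x - 6*n*α*β^3 + 240*n*α*β^2*x - 18*n*α*β^2 + 930*n*α*β*x + 54*n*α*β + 1160*n*α*x + 112*n*α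 + 5*n*β^4*x - 3*n*β^4 + 80*n*β^3*x - 24*n*β^3 + 465*n*β^2*x - 41*n*β^2 + 1160*n*β*x + 24*n*β + 1044*n*x + 44*n + (1/2)*α^5*x + (1/2)*α^5 + (5/2)*α^4*β*x + (3/2)*α^4*β + 10*α^4*x + 7*α^4 + 5*α^3*β^2*x + α^3*β^2 + 40*α^3*β*x + 15*α^3*β + (155/2)*α^3*x + (69/2)*α^3 + 5*α^2*β^3*x - α^2*β^3 + 60*α^2*β^2*x + 3*α^2*β^2 + (465/2)*α^2*β*x + (95/2)*α^2*β + 290*α^2*x + 74*α^2 + (5/2)*α*β^4*x - (3/2)*α*β^4 + 40*α*β^3*x - 11*α*β^3 + (465/2)*α*β^2*x - (17/2)*α*β^2 + 580*α*β*x + 56*α*β + 522*α*x + 70*α + (1/2)*β^5*x - (1/2)*β^5 + 10*β^4*x - 6*β^4 + (155/2)*β^3*x - (43/2)*β^3 + 290*β^2*x - 18*β^2 + 522*β*x + 22*β + 360*x + 24) * H1 + (-8*n^5 - 20*n^4*α - 20*n^4*β - 84*n^4 - 18*n^3*α^2 - 44*n^3*α*β - 164*n^3*α - 18*n^3*β^2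 - 172*n^3*β - 344*n^3 - 7*n^2*α^3 - 33*n^2*α^2*β - 105*n^2*α^2 - 33*n^2*α*β^2 - 282*n^2*α*β - 486*n^2*α - 7*n^2*β^3 - 117*n^2*β^2 - 546*n^2*β - 684*n^2 - n*α^4 - 10*n*α^3*β - 24*n*α^3 - 18*n*α^2*β^2 - 138*n*α^2*β - 191*n*α^2 - 10*n*α*β^3 - 144*n*α*β^2 - 590*n*α*β - 610*n*α - n*β^4 - 30*n*β^3 - 251*n*β^2 - 758*n*β - 656*n - α^4*β - α^4 - 3*α^3*β^2 - 20*α^3*β - 17*α^3 - 3*α^2*β^3 - 39*α^2*β^2 - 140*α^2*β - 104*α^2 - α*β^4 - 22*α*β^3 - 155*α*β^2 - 402*α*β - 268*α - 2*β^4 - 32*β^3 - 178*β^2 - 388*β - 240) * H0 + (-4*n^3 - 8*n^2*α - 4*n^2*β - 30*n^2 - 5*n*α^2 - 6*n*α*β - 41*n*α - n*β^2 - 19*n*β - 74*n - α^3 - 2*α^2*β - 13*α^2 - α*β^2 - 15*α*β - 52*α - 2*β^2 - 22*β - 60) * HW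
set_option maxHeartbeats 1000000 in
set_option maxRecDepth 8000 in
lemma coreRel (α β : ℝ) (hα : -1 < α) (hβ : -1 < β) : ∀ (k : ℕ) (x : ℝ),
    ((k:ℝ)+1) * jacP α β (k+1) x - (α+(k:ℝ)+1) * jacP α β k x
    = (x-1) * ((2*(k:ℝ)+α+β+2)/2) * jacP (α+1) β k x := by
  have hab : -2 < α + β := by linarith
  have hab1 : -2 < (α+1) + β := by linarith
  have h2 : (α+β+2) ≠ 0 := ne_of_gt (by linarith)
  suffices H : ∀ k : ℕ, (∀ x : ℝ, ((k:ℝ)+1) * jacP α β (k+1) x - (α+(k:ℝ)+1) * jacP α β k x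
      = (x-1) * ((2*(k:ℝ)+α+β+2)/2) * jacP (α+1) β k x)
    ∧ (∀ x : ℝ, (((k+1:ℕ):ℝ)+1) * jacP α β ((k+1)+1) x - (α+((k+1:ℕ):ℝ)+1) * jacP α β (k+1) x
      = (x-1) * ((2*((k+1:ℕ):ℝ)+α+β+2)/2) * jacP (α+1) β (k+1) x) by
    exact fun k => (H k).1
  intro k
  induction k with
  | zero =>
    constructor
    · intro x
      show (((0:ℕ):ℝ)+1) * ((x - jacA α β 0) / jacC α β 0) - (α+((0:ℕ):ℝ)+1) * 1
        = (x-1) * ((2*((0:ℕ):ℝ)+α+β+2)/2) * 1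
      rw [jacA, jacC]
      norm_num
      field_simp
      ring
    · intro x
      have hp1 : (0:ℝ) < 2+α+β := by linarith
      have hp2 : (0:ℝ) < α+β+2 := by linarith
      have hab2 : ((α+1)+β+2) ≠ 0 := ne_of_gt (by linarith)
      have hP1 : 2 * jacP α β 1 x = x*(α+β+2) - (β-α) := by
        show 2 * ((x - jacA α β 0)/jacC α β 0) = _
        rw [jacA, jacC]
        rw [if_pos rfl, if_pos rfl]
        field_simp
      have hQ1 : 2 * jacP (α+1) β 1 x = x*((α+1)+β+2) - (β-(α+1)) := by
        show 2 * ((x - jacA (α+1) β 0)/jacC (α+1) β 0) = _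
        rw [jacA, jacC]
        rw [if_pos rfl, if_pos rfl]
        field_simp
      have hP0 : jacP α β 0 x = 1 := rfl
      have HW0 := jacP_rec_cleared α β hab 0 x
      norm_num at HW0 ⊢
      have hMne : (2*((2:ℝ)+α+β)*(α+β+2)) ≠ 0 :=
        ne_of_gt (mul_pos (mul_pos two_pos hp1) hp2)
      refine mul_left_cancel₀ hMne ?_
      linear_combination HW0
        + (-(1/2)*α^3*x + (1/2)*α^3 - (3/2)*α^2*β*x + (3/2)*α^2*β - 4*α^2*x + 4*α^2
           - (3/2)*α*β^2*x + (3/2)*α*β^2 - 8*α*β*x + 8*α*β - 10*α*x + 10*α - (1/2)*β^3*x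
           + (1/2)*β^3 - 4*β^2*x + 4*β^2 - 10*β*x + 10*β - 8*x + 8) * hQ1
        + ((1/2)*α^3*x - (1/2)*α^3 + (3/2)*α^2*β*x - (3/2)*α^2*β + (9/2)*α^2*x - (9/2)*α^2
           + (3/2)*α*β^2*x - (3/2)*α*β^2 + 9*α*β*x - 8*α*β + 13*α*x - 12*α + (1/2)*β^3*x
           - (1/2)*β^3 + (9/2)*β^2*x - (7/2)*β^2 + 13*β*x - 8*β + 12*x - 8) * hP1
        + (-2*α^2*β - 2*α^2 - 2*α*β^2 - 12*α*β - 10*α - 2*β^2 - 10*β - 8) * hP0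
  | succ k ih =>
    refine ⟨ih.2, ?_⟩
    intro x
    have hk : (0:ℝ) ≤ (k:ℝ) := Nat.cast_nonneg k
    have HW : 2*((k:ℝ)+2)*((k:ℝ)+2+α+β)*(2*(k:ℝ)+α+β+2) * jacP α β (k+2) x
        = (x*(2*(k:ℝ)+α+β+2)*(2*(k:ℝ)+α+β+4) - (β-α)*(α+β))*(2*(k:ℝ)+α+β+3) * jacP α β (k+1) x
          - 2*((k:ℝ)+1+α)*((k:ℝ)+1+β)*(2*(k:ℝ)+α+β+4) * jacP α β k x :=
      jacP_rec_cleared α β hab k x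
    have HT0 := jacP_rec_cleared α β hab (k+1) x
    have HQ0 := jacP_rec_cleared (α+1) β hab1 k x
    have H0 := ih.1 x
    have H1 := ih.2 x
    push_cast at HT0 H1 ⊢
    simp only [show k+1+1 = k+2 by omega, show k+1+2 = k+3 by omega,
      show k+1+1+1 = k+3 by omega] at HT0 H1 ⊢
    have key := corePoly α β (k:ℝ) x (jacP α β k x) (jacP α β (k+1) x) (jacP α β (k+2) x)
      (jacP α β (k+3) x) (jacP (α+1) β k x) (jacP (α+1) β (k+1) x) (jacP (α+1) β (k+2) x)
      (by linear_combination HW) (by linear_combination HT0) (by linear_combination HQ0)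
      (by linear_combination 2*H0) (by linear_combination 2*H1)
    have p1 : (0:ℝ) < 2*(k:ℝ)+α+β+4 := by linarith
    have p2 : (0:ℝ) < 2*(k:ℝ)+α+β+2 := by linarith
    have p3 : (0:ℝ) < 2*(k:ℝ)+α+β+3 := by linarith
    have p4 : (0:ℝ) < (k:ℝ)+2 := by linarith
    have p5 : (0:ℝ) < (k:ℝ)+3+α+β := by linarith
    have hne : ((2*(k:ℝ)+α+β+4)*(2*(k:ℝ)+α+β+2)*(2*(k:ℝ)+α+β+3)*((k:ℝ)+2)*((k:ℝ)+3+α+β)) ≠ 0 :=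
      ne_of_gt (mul_pos (mul_pos (mul_pos (mul_pos p1 p2) p3) p4) p5)
    exact mul_left_cancel₀ hne (by linear_combination key / 2)

lemma keyRel (α β : ℝ) (hα : -1 < α) (hβ : -1 < β) (k : ℕ) (x : ℝ) :
    cBarBarOdd α (k+1) * jacP α β (k+1) x - cBarBarOdd α k * jacP α β k x
    = (x-1) * (cBarEven α β k * jacP (α+1) β k x) := by
  have hk : (0:ℝ) ≤ (k:ℝ) := Nat.cast_nonneg k
  have hc : (α+(k:ℝ)+1) ≠ 0 := ne_of_gt (by linarith)
  have hΓpos : 0 < Real.Gamma (α+(k:ℝ)+1) := Real.Gamma_pos_of_pos (by linarith)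
  have hΓ : Real.Gamma (α+(k:ℝ)+1) ≠ 0 := ne_of_gt hΓpos
  have hg : Real.Gamma (α+((k+1:ℕ):ℝ)+1) = (α+(k:ℝ)+1) * Real.Gamma (α+(k:ℝ)+1) := by
    push_cast
    rw [show α+((k:ℝ)+1)+1 = (α+(k:ℝ)+1)+1 by ring, Real.Gamma_add_one hc]
  have hg2 : Real.Gamma (((k+1:ℕ):ℝ)+1) = ((k:ℝ)+1) * Real.Gamma ((k:ℝ)+1) := by
    push_cast
    rw [show (k:ℝ)+1+1 = ((k:ℝ)+1)+1 by ring, Real.Gamma_add_one (by linarith)]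
  have hg3 : Real.Gamma (α+(k:ℝ)+2) = (α+(k:ℝ)+1) * Real.Gamma (α+(k:ℝ)+1) := by
    rw [show α+(k:ℝ)+2 = (α+(k:ℝ)+1)+1 by ring, Real.Gamma_add_one hc]
  have hcore := coreRel α β hα hβ k x
  have E1 : (α+(k:ℝ)+1) * Real.Gamma (α+(k:ℝ)+1) * cBarBarOdd α (k+1)
      = ((k:ℝ)+1) * Real.Gamma ((k:ℝ)+1) * Real.Gamma (α+1) := by
    rw [cBarBarOdd, hg, hg2]
    field_simp
  have E0 : Real.Gamma (α+(k:ℝ)+1) * cBarBarOdd α k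
      = Real.Gamma ((k:ℝ)+1) * Real.Gamma (α+1) := by
    rw [cBarBarOdd]
    field_simp
  have E2 : (α+(k:ℝ)+1) * Real.Gamma (α+(k:ℝ)+1) * 2 * cBarEven α β k
      = (2*(k:ℝ)+α+β+2) * Real.Gamma ((k:ℝ)+1) * Real.Gamma (α+1) := by
    rw [cBarEven, hg3]
    field_simp
  refine mul_left_cancel₀ (show ((α+(k:ℝ)+1) * Real.Gamma (α+(k:ℝ)+1) * 2 : ℝ) ≠ 0 from by
    exact mul_ne_zero (mul_ne_zero hc hΓ) two_ne_zero) ?_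
  linear_combination (2 * jacP α β (k+1) x) * E1 - (2 * (α+(k:ℝ)+1) * jacP α β k x) * E0
    - ((x-1) * jacP (α+1) β k x) * E2
    + (2 * Real.Gamma ((k:ℝ)+1) * Real.Gamma (α+1)) * hcore

lemma jacP_one (α β : ℝ) (hα : -1 < α) (hβ : -1 < β) : ∀ k : ℕ, cBarBarOdd α k * jacP α β k 1 = 1 := by
  intro k
  induction k with
  | zero =>
    show cBarBarOdd α 0 * 1 = 1
    rw [cBarBarOdd]
    simp only [Nat.cast_zero, zero_add, add_zero, mul_one]
    rw [Real.Gamma_one, one_mul]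
    exact div_self (ne_of_gt (Real.Gamma_pos_of_pos (by linarith)))
  | succ k ih =>
    have h := keyRel α β hα hβ k 1
    norm_num at h
    rw [sub_eq_zero] at h
    rw [h, ih]

lemma telescope (α β : ℝ) (hα : -1 < α) (hβ : -1 < β) (m : ℕ) : ∀ n, m ≤ n → ∀ x : ℝ,
    cBarBarOdd α n * jacP α β n x - cBarBarOdd α m * jacP α β m x
    = (x-1) * ∑ k ∈ Finset.Ico m n, cBarEven α β k * jacP (α+1) β k x := by
  refine Nat.le_induction ?_ ?_
  · intro x
    simp
  · intro n hmn ih x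
    rw [Finset.sum_Ico_succ_top hmn, mul_add]
    have h1 := keyRel α β hα hβ n x
    have h2 := ih x
    linear_combination h1 + h2

/-- the branching rule: expanding the (p+1)×(p+1) determinant with one
column evaluated at 1 as a sum over interlacing partitions μ ≺ λ. -/
theorem stmt17 (α β : ℝ) (hα : -1 < α) (hβ : -1 < β)
    (p : ℕ) (hp : 1 ≤ p) (lam : Fin (p+1) → ℕ) (hlam : Antitone lam)
    (x : Fin p → ℝ) :
    Matrix.det (Matrix.of fun i j : Fin (p+1) =>
      if h : (j:ℕ) < p then
        cBarBarOdd α (lam i + (p - (i:ℕ))) * jacP α β (lam i + (p - (i:ℕ))) (x ⟨(j:ℕ), h⟩)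
      else
        cBarBarOdd α (lam i + (p - (i:ℕ))) * jacP α β (lam i + (p - (i:ℕ))) 1)
    = (∏ j : Fin p, (x j - 1)) *
      ∑' μ : {m : Fin p → ℕ // Antitone m ∧
                ∀ i : Fin p, m i ≤ lam i.castSucc ∧ lam i.succ ≤ m i},
        Matrix.det (Matrix.of fun i j : Fin p =>
          cBarEven α β (μ.1 i + (p - 1 - (i:ℕ))) *
            jacP (α+1) β (μ.1 i + (p - 1 - (i:ℕ))) (x j)) := by
  -- notation
  set M : Matrix (Fin (p+1)) (Fin (p+1)) ℝ := Matrix.of fun i j : Fin (p+1) =>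
      if h : (j:ℕ) < p then
        cBarBarOdd α (lam i + (p - (i:ℕ))) * jacP α β (lam i + (p - (i:ℕ))) (x ⟨(j:ℕ), h⟩)
      else
        cBarBarOdd α (lam i + (p - (i:ℕ))) * jacP α β (lam i + (p - (i:ℕ))) 1 with hMdef
  set g : ℕ → ℝ → ℝ := fun k y => cBarEven α β k * jacP (α+1) β k y with hgdef
  set S : Fin p → Finset ℕ :=
    fun i => Finset.Ico (lam i.succ + (p - ((i:ℕ)+1))) (lam i.castSucc + (p - (i:ℕ))) with hSdef
  -- the row-operation matrix
  set L : Matrix (Fin (p+1)) (Fin (p+1)) ℝ := Matrix.of fun i j =>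
      if j = i then (1:ℝ) else if (j:ℕ) = (i:ℕ)+1 then (-1:ℝ) else 0 with hLdef
  have hLdet : L.det = 1 := by
    have hut : L.BlockTriangular id := by
      intro i j hij
      have hij' : (j:ℕ) < (i:ℕ) := hij
      simp only [hLdef, Matrix.of_apply]
      rw [if_neg (fun h => by subst h; omega), if_neg (by omega)]
    rw [Matrix.det_of_upperTriangular hut]
    simp [hLdef]
  -- entries of L * M
  have hN : ∀ i j, (L * M) i j
      = M i j - (if h : (i:ℕ)+1 < p+1 then M ⟨(i:ℕ)+1, h⟩ j else 0) := by
    intro i j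
    rw [Matrix.mul_apply]
    have hterm : ∀ k : Fin (p+1), L i k * M k j
        = (if k = i then M k j else 0) + (if (k:ℕ) = (i:ℕ)+1 then -(M k j) else 0) := by
      intro k
      simp only [hLdef, Matrix.of_apply]
      split_ifs with h1 h2 h2
      · exact absurd (h1 ▸ h2) (by omega)
      · ring
      · ring
      · ring
    rw [Finset.sum_congr rfl (fun k _ => hterm k), Finset.sum_add_distrib,
      Finset.sum_ite_eq' Finset.univ i (fun k => M k j)]
    simp only [Finset.mem_univ, if_true]
    have h2 : (∑ k : Fin (p+1), if (k:ℕ) = (i:ℕ)+1 then -(M k j) else 0)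
        = -(if h : (i:ℕ)+1 < p+1 then M ⟨(i:ℕ)+1, h⟩ j else 0) := by
      by_cases h : (i:ℕ)+1 < p+1
      · rw [dif_pos h]
        rw [Fintype.sum_eq_single (⟨(i:ℕ)+1, h⟩ : Fin (p+1))
          (fun k hk => if_neg (fun hc => hk (Fin.ext hc)))]
        simp
      · rw [dif_neg h]
        have hz : ∀ k : Fin (p+1), ¬((k:ℕ) = (i:ℕ)+1) := by
          intro k hk
          exact h (hk ▸ k.isLt)
        simp [hz]
    rw [h2]
    ring
  -- block structure
  set Bp : Matrix (Fin p) (Fin p) ℝ := Matrix.of fun i j => ∑ k ∈ S i, g k (x j) with hBpdef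
  set B : Matrix (Fin p) (Fin p) ℝ := Matrix.of fun i j => (x j - 1) * Bp i j with hBdef
  set C : Matrix (Fin 1) (Fin p) ℝ :=
    Matrix.of fun _ j => (L * M) (finSumFinEquiv (Sum.inr 0)) (finSumFinEquiv (Sum.inl j)) with hCdef
  set D : Matrix (Fin 1) (Fin 1) ℝ := Matrix.of fun _ _ => (1:ℝ) with hDdef
  have lamle : ∀ i : Fin p, lam i.succ + (p - ((i:ℕ)+1)) ≤ lam i.castSucc + (p - (i:ℕ)) := by
    intro i
    have h1 : lam i.succ ≤ lam i.castSucc := hlam (Fin.castSucc_le_succ i)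
    have h2 : (i:ℕ) < p := i.isLt
    omega
  have hone : ∀ n : ℕ, cBarBarOdd α n * jacP α β n 1 = 1 := jacP_one α β hα hβ
  have hblocks : (L * M).submatrix finSumFinEquiv finSumFinEquiv
      = Matrix.fromBlocks B 0 C D := by
    ext i j
    cases i with
    | inl i =>
      have hilt : (i:ℕ)+1 < p+1 := by have := i.isLt; omega
      cases j with
      | inl j =>
        simp only [Matrix.submatrix_apply, Matrix.fromBlocks_apply₁₁,
          finSumFinEquiv_apply_left]
        rw [hN]
        simp only [hMdef, Matrix.of_apply, hBdef, hBpdef, hgdef, hSdef, Fin.coe_castAdd,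
          Fin.eta, dif_pos hilt, dif_pos j.isLt]
        exact telescope α β hα hβ _ _ (lamle i) (x j)
      | inr j =>
        simp only [Matrix.submatrix_apply, Matrix.fromBlocks_apply₁₂,
          finSumFinEquiv_apply_right, Matrix.zero_apply]
        rw [hN]
        simp only [hMdef, Matrix.of_apply, finSumFinEquiv_apply_left, Fin.coe_castAdd,
          Fin.coe_natAdd, dif_pos hilt,
          dif_neg (show ¬(p + ((j:Fin 1):ℕ) < p) by omega), hone, sub_self]
    | inr i =>
      rw [Subsingleton.elim i (0 : Fin 1)]
      cases j with
      | inl j =>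
        simp only [Matrix.submatrix_apply, Matrix.fromBlocks_apply₂₁, hCdef, Matrix.of_apply]
      | inr j =>
        rw [Subsingleton.elim j (0 : Fin 1)]
        simp only [Matrix.submatrix_apply, Matrix.fromBlocks_apply₂₂,
          finSumFinEquiv_apply_right, hDdef, Matrix.of_apply]
        rw [hN]
        simp only [hMdef, Matrix.of_apply, Fin.coe_natAdd,
          dif_neg (show ¬(p + (((0:Fin 1)):ℕ) + 1 < p + 1) by omega),
          dif_neg (show ¬(p + (((0:Fin 1)):ℕ) < p) by omega)]
        rw [hone]
        ring
  -- determinant chain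
  have hdet1 : M.det = B.det := by
    calc M.det = (L * M).det := by rw [Matrix.det_mul, hLdet, one_mul]
      _ = ((L * M).submatrix finSumFinEquiv finSumFinEquiv).det :=
          (Matrix.det_submatrix_equiv_self _ _).symm
      _ = (Matrix.fromBlocks B 0 C D).det := by rw [hblocks]
      _ = B.det * D.det := Matrix.det_fromBlocks_zero₁₂ B C D
      _ = B.det := by rw [Matrix.det_fin_one]; simp [hDdef]
  have hBdet : B.det = (∏ j, (x j - 1)) * Bp.det := Matrix.det_mul_row _ _
  have hBp : Bp.det = ∑ r ∈ Fintype.piFinset S, (Matrix.of fun i j => g (r i) (x j)).det := by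
    have hrow : Bp = fun i => ∑ k ∈ S i, (fun j => g k (x j)) := by
      funext i j
      simp [hBpdef, Finset.sum_apply]
    calc Bp.det = Matrix.detRowAlternating Bp := rfl
      _ = Matrix.detRowAlternating (fun i => ∑ k ∈ S i, (fun j => g k (x j))) := by rw [hrow]
      _ = ∑ r ∈ Fintype.piFinset S,
            Matrix.detRowAlternating (fun i => (fun j => g (r i) (x j))) :=
          (Matrix.detRowAlternating (R := ℝ) (n := Fin p)).toMultilinearMap.map_sum_finset
            (fun i k => fun j => g k (x j)) S
      _ = ∑ r ∈ Fintype.piFinset S, (Matrix.of fun i j => g (r i) (x j)).det := rfl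
  -- finiteness of the interlacing subtype
  have hfin : Finite {m : Fin p → ℕ // Antitone m ∧
      ∀ i : Fin p, m i ≤ lam i.castSucc ∧ lam i.succ ≤ m i} := by
    apply Finite.of_injective (β := Fin p → Fin (lam 0 + 1))
      (fun μ i => ⟨μ.1 i, Nat.lt_succ_of_le ((μ.2.2 i).1.trans (hlam (Fin.zero_le i.castSucc)))⟩)
    intro μ ν h
    apply Subtype.ext
    funext i
    simpa using congrFun h i
  letI : Fintype {m : Fin p → ℕ // Antitone m ∧
      ∀ i : Fin p, m i ≤ lam i.castSucc ∧ lam i.succ ≤ m i} := Fintype.ofFinite _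
  rw [tsum_fintype, hdet1, hBdet, hBp]
  congr 1
  have hb : ∀ (r : Fin p → ℕ), r ∈ Fintype.piFinset S → ∀ i : Fin p,
      lam i.succ + (p - ((i:ℕ)+1)) ≤ r i ∧ r i < lam i.castSucc + (p - (i:ℕ)) := by
    intro r hr i
    exact Finset.mem_Ico.mp (by simpa [hSdef] using Fintype.mem_piFinset.mp hr i)
  have hstep : ∀ (a b : Fin p), a < b → lam b.castSucc ≤ lam a.succ := by
    intro a b hab
    refine hlam ?_
    rw [Fin.le_def]
    simp only [Fin.val_succ, Fin.coe_castSucc]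
    exact hab
  refine Finset.sum_bij' (i := fun r hr =>
      (⟨fun i => r i - (p - 1 - (i:ℕ)), ?_, ?_⟩ :
        {m : Fin p → ℕ // Antitone m ∧ ∀ i : Fin p, m i ≤ lam i.castSucc ∧ lam i.succ ≤ m i}))
    (j := fun μ _ => fun i => μ.1 i + (p - 1 - (i:ℕ))) ?_ ?_ ?_ ?_ ?_
  · -- antitone
    intro a b hab
    rcases eq_or_lt_of_le hab with h | h
    · rw [h]
    · have h1 := (hb r hr a).1
      have h2 := (hb r hr b).2
      have h3 := hstep a b h
      have ha := a.isLt
      have hbb := b.isLt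
      have h4 : (a:ℕ) < (b:ℕ) := h
      simp only
      omega
  · -- interlacing
    intro i
    have h1 := (hb r hr i).1
    have h2 := (hb r hr i).2
    have hi := i.isLt
    dsimp only
    constructor
    · omega
    · omega
  · -- maps into univ
    intro r hr
    exact Finset.mem_univ _
  · -- j maps into piFinset S
    intro μ _
    refine Fintype.mem_piFinset.mpr fun i => ?_
    have h1 := (μ.2.2 i).1
    have h2 := (μ.2.2 i).2
    have hi := i.isLt
    simp only [hSdef, Finset.mem_Ico]
    omega
  · -- left inverse
    intro r hr
    funext i
    have h1 := (hb r hr i).1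
    have hi := i.isLt
    simp only
    omega
  · -- right inverse
    intro μ _
    apply Subtype.ext
    funext i
    have hi := i.isLt
    simp only
    omega
  · -- summands agree
    intro r hr
    have hval : ∀ i : Fin p, r i - (p - 1 - (i:ℕ)) + (p - 1 - (i:ℕ)) = r i := by
      intro i
      have h1 := (hb r hr i).1
      have hi := i.isLt
      omega
    congr 1
    ext i j
    simp only [Matrix.of_apply, hval i, hgdef]
end
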